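/- An n-qubit unitary U in C_k is semi-Clifford if and only if the intersection (U P_n U†) ∩ P_n contains a maximal abelian subgroup of P_n. -/

import Mathlib

open Matrix Complex

/-- Index type for `n`-qubit computational basis states. -/
abbrev Q (n : ℕ) := Fin n → Fin 2

/-- The four single-qubit Pauli matrices I, X, Y, Z. -/
noncomputable def pauli1 : Fin 4 → Matrix (Fin 2) (Fin 2) ℂ :=
  ![1, !![0, 1; 1, 0], !![0, -Complex.I; Complex.I, 0], !![1, 0; 0, -1]]

/-- The tensor product of `n` single-qubit operators. -/
noncomputable def tensorOp {n : ℕ} (f : Fin n → Matrix (Fin 2) (Fin 2) ℂ) :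
    Matrix (Q n) (Q n) ℂ :=
  Matrix.of fun x y => ∏ i, f i (x i) (y i)

/-- The `n`-qubit Pauli group: tensor products of Pauli matrices with phases ±1, ±i. -/
noncomputable def PauliGroup (n : ℕ) : Set (Matrix (Q n) (Q n) ℂ) :=
  { M | ∃ (s : Fin 4) (f : Fin n → Fin 4),
      M = Complex.I ^ (s : ℕ) • tensorOp fun i => pauli1 (f i) }

/-- The Clifford hierarchy: `Ck n 1` is the Pauli group and
`Ck n (k+1) = {U unitary : U P U† ∈ Ck n k for all Paulis P}`. -/
noncomputable def Ck (n : ℕ) : ℕ → Set (Matrix (Q n) (Q n) ℂ)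
  | 0 => PauliGroup n
  | 1 => PauliGroup n
  | (k + 2) => { U | U ∈ Matrix.unitaryGroup (Q n) ℂ ∧
      ∀ P ∈ PauliGroup n, U * P * Uᴴ ∈ Ck n (k + 1) }

/-- A subgroup of the `n`-qubit Pauli group (given as a set of matrices closed
under the group operations; inverses of Paulis are conjugate transposes). -/
noncomputable def IsPauliSubgroup (n : ℕ) (G : Set (Matrix (Q n) (Q n) ℂ)) : Prop :=
  G ⊆ PauliGroup n ∧ (1 : Matrix (Q n) (Q n) ℂ) ∈ G ∧
    (∀ A ∈ G, ∀ B ∈ G, A * B ∈ G) ∧ (∀ A ∈ G, Aᴴ ∈ G)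

/-- A maximal abelian subgroup of the `n`-qubit Pauli group. -/
noncomputable def IsMaxAbelian (n : ℕ) (G : Set (Matrix (Q n) (Q n) ℂ)) : Prop :=
  IsPauliSubgroup n G ∧ (∀ A ∈ G, ∀ B ∈ G, A * B = B * A) ∧
    ∀ G', IsPauliSubgroup n G' → (∀ A ∈ G', ∀ B ∈ G', A * B = B * A) →
      G ⊆ G' → G' ⊆ G

/-- A semi-Clifford operation: a unitary sending by conjugation some maximal
abelian subgroup of the Pauli group onto another maximal abelian subgroup. -/
noncomputable def SemiClifford (n : ℕ) (R : Matrix (Q n) (Q n) ℂ) : Prop :=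
  R ∈ Matrix.unitaryGroup (Q n) ℂ ∧
    ∃ G, IsMaxAbelian n G ∧ IsMaxAbelian n ((fun A => R * A * Rᴴ) '' G)

namespace SCAux

def decode : ZMod 2 × ZMod 2 → Fin 4 := fun p =>
  if p = (0,0) then 0 else if p = (1,0) then 1 else if p = (1,1) then 2 else 3
def encode : Fin 4 → ZMod 2 × ZMod 2 := ![(0,0),(1,0),(1,1),(0,1)]
lemma decode_encode (a : Fin 4) : decode (encode a) = a := by revert a; decide
lemma encode_decode (p : ZMod 2 × ZMod 2) : encode (decode p) = p := by revert p; decide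

def add4 : Fin 4 → Fin 4 → Fin 4 := fun a b => ![![0,1,2,3],![1,0,3,2],![2,3,0,1],![3,2,1,0]] a b
lemma decode_add (p q : ZMod 2 × ZMod 2) : decode (p + q) = add4 (decode p) (decode q) := by
  revert p q; decide

def ctab : Fin 4 → Fin 4 → ℕ := fun a b => ![![0,0,0,0],![0,0,1,3],![0,3,0,1],![0,1,3,0]] a b
def sp (a b : ZMod 2 × ZMod 2) : ZMod 2 := a.1 * b.2 + a.2 * b.1
noncomputable def chi : ZMod 2 → ℂ := fun x => if x = 0 then 1 else -1

lemma zmod2_cases (x : ZMod 2) : x = 0 ∨ x = 1 := by revert x; decide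

lemma chi_add (x y : ZMod 2) : chi (x + y) = chi x * chi y := by
  rcases zmod2_cases x with hx|hx <;> rcases zmod2_cases y with hy|hy <;> subst hx <;> subst hy <;>
    first
      | (rw [show (1 : ZMod 2) + 1 = 0 from by decide]; norm_num [chi])
      | norm_num [chi]

lemma chi_zero : chi 0 = 1 := by norm_num [chi]

lemma pauli1_herm (a : Fin 4) : (pauli1 a)ᴴ = pauli1 a := by
  fin_cases a <;> ext x y <;> fin_cases x <;> fin_cases y <;>
    simp [pauli1, Matrix.conjTranspose_apply]

lemma pauli1_mul (a b : Fin 4) :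
    pauli1 a * pauli1 b = (Complex.I) ^ (ctab a b) • pauli1 (add4 a b) := by
  fin_cases a <;> fin_cases b <;>
    · norm_num [add4, ctab]
      ext x y
      fin_cases x <;> fin_cases y <;>
        simp [pauli1, Matrix.mul_apply, Matrix.smul_apply, Fin.sum_univ_two, pow_succ,
          Complex.I_mul_I] <;> ring

lemma ctab_chi (a b : Fin 4) :
    ((Complex.I : ℂ)) ^ (ctab a b) = chi (sp (encode a) (encode b)) * Complex.I ^ (ctab b a) := by
  by_cases h : sp (encode a) (encode b) = 0
  · have key : ∀ a b : Fin 4, sp (encode a) (encode b) = 0 → ctab a b = ctab b a := by decide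
    rw [h, chi_zero, one_mul, key a b h]
  · have h1 : sp (encode a) (encode b) = 1 := by
      rcases zmod2_cases (sp (encode a) (encode b)) with h'|h' <;> tauto
    have key : ∀ a b : Fin 4, sp (encode a) (encode b) = 1 →
        (ctab a b = 1 ∧ ctab b a = 3) ∨ (ctab a b = 3 ∧ ctab b a = 1) := by decide
    have hchi : chi (sp (encode a) (encode b)) = -1 := by rw [h1]; norm_num [chi]
    rcases key a b h1 with ⟨h2,h3⟩|⟨h2,h3⟩ <;>
      simp [h2, h3, hchi, pow_succ, Complex.I_mul_I] <;> ring

lemma add4_self (a : Fin 4) : add4 a a = 0 := by revert a; decide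
lemma ctab_self (a : Fin 4) : ctab a a = 0 := by revert a; decide

end SCAux

section TensorPart
open SCAux

variable {n : ℕ}

lemma tensorOp_mul (f g : Fin n → Matrix (Fin 2) (Fin 2) ℂ) :
    tensorOp f * tensorOp g = tensorOp (fun i => f i * g i) := by
  ext x y
  show ∑ z : Q n, (∏ i, f i (x i) (z i)) * ∏ i, g i (z i) (y i) = ∏ i, (f i * g i) (x i) (y i)
  have : ∀ i, (f i * g i) (x i) (y i) = ∑ z : Fin 2, f i (x i) z * g i z (y i) := by
    intro i; rw [Matrix.mul_apply]
  simp_rw [this]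
  rw [Fintype.prod_sum fun i z => f i (x i) z * g i z (y i)]
  congr 1; ext z; rw [← Finset.prod_mul_distrib]

lemma tensorOp_smul (c : Fin n → ℂ) (f : Fin n → Matrix (Fin 2) (Fin 2) ℂ) :
    tensorOp (fun i => c i • f i) = (∏ i, c i) • tensorOp f := by
  ext x y
  show ∏ i, (c i • f i) (x i) (y i) = (∏ i, c i) * ∏ i, f i (x i) (y i)
  rw [← Finset.prod_mul_distrib]; rfl

lemma tensorOp_conjTranspose (f : Fin n → Matrix (Fin 2) (Fin 2) ℂ) :
    (tensorOp f)ᴴ = tensorOp fun i => (f i)ᴴ := by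
  ext x y
  show star (∏ i, f i (y i) (x i)) = ∏ i, (f i)ᴴ (x i) (y i)
  rw [star_prod]; rfl

lemma tensorOp_one : tensorOp (fun _ : Fin n => (1 : Matrix (Fin 2) (Fin 2) ℂ)) = 1 := by
  ext x y
  show ∏ i, (1 : Matrix (Fin 2) (Fin 2) ℂ) (x i) (y i) = (1 : Matrix (Q n) (Q n) ℂ) x y
  by_cases h : x = y
  · subst h; simp [Matrix.one_apply]
  · rw [Matrix.one_apply_ne h]
    obtain ⟨i, hi⟩ := Function.ne_iff.mp h
    exact Finset.prod_eq_zero (Finset.mem_univ i) (Matrix.one_apply_ne hi)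

lemma trace_tensorOp (f : Fin n → Matrix (Fin 2) (Fin 2) ℂ) :
    (tensorOp f).trace = ∏ i, (f i).trace := by
  unfold Matrix.trace Matrix.diag
  show ∑ x : Q n, ∏ i, f i (x i) (x i) = ∏ i, ∑ z : Fin 2, f i z z
  rw [Fintype.prod_sum fun i z => f i z z]

/-- the tensor Pauli indexed by a symplectic vector -/
noncomputable def Tm (v : Fin n → ZMod 2 × ZMod 2) : Matrix (Q n) (Q n) ℂ :=
  tensorOp fun i => pauli1 (decode (v i))

lemma Tm_mul (v w : Fin n → ZMod 2 × ZMod 2) :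
    Tm v * Tm w = (Complex.I) ^ (∑ i, ctab (decode (v i)) (decode (w i))) • Tm (v + w) := by
  unfold Tm
  rw [tensorOp_mul]
  have : (fun i => pauli1 (decode (v i)) * pauli1 (decode (w i)))
      = fun i => (Complex.I ^ (ctab (decode (v i)) (decode (w i)))) • pauli1 (decode ((v + w) i)) := by
    funext i
    rw [pauli1_mul]
    show _ = _ • pauli1 (decode (v i + w i))
    rw [decode_add]
  rw [this, tensorOp_smul, Finset.prod_pow_eq_pow_sum]

lemma Tm_zero : Tm (0 : Fin n → ZMod 2 × ZMod 2) = 1 := by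
  unfold Tm
  have : ∀ i : Fin n, pauli1 (decode ((0 : Fin n → ZMod 2 × ZMod 2) i)) = 1 := by
    intro i; show pauli1 (decode 0) = 1; rw [show decode 0 = 0 from by decide]; rfl
  simp_rw [this]; exact tensorOp_one

lemma add_self_zero (v : Fin n → ZMod 2 × ZMod 2) : v + v = 0 := by
  funext i
  show v i + v i = 0
  rcases v i with ⟨a, b⟩
  rcases zmod2_cases a with h|h <;> rcases zmod2_cases b with h'|h' <;> subst h <;> subst h' <;>
    decide

lemma Tm_sq (v : Fin n → ZMod 2 × ZMod 2) : Tm v * Tm v = 1 := by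
  rw [Tm_mul, add_self_zero, Tm_zero]
  simp [ctab_self]

lemma matrix_one_ne_zero : (1 : Matrix (Q n) (Q n) ℂ) ≠ 0 := by
  intro h
  have := congrFun (congrFun h (fun _ => 0)) (fun _ => 0)
  simp [Matrix.one_apply] at this

lemma Tm_ne_zero (v : Fin n → ZMod 2 × ZMod 2) : Tm v ≠ 0 := by
  intro h
  have := Tm_sq v
  rw [h, zero_mul] at this
  exact matrix_one_ne_zero this.symm

lemma Tm_herm (v : Fin n → ZMod 2 × ZMod 2) : (Tm v)ᴴ = Tm v := by
  unfold Tm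
  rw [tensorOp_conjTranspose]
  simp_rw [pauli1_herm]

lemma trace_Tm_ne (v : Fin n → ZMod 2 × ZMod 2) (h : v ≠ 0) : (Tm v).trace = 0 := by
  obtain ⟨i, hi⟩ := Function.ne_iff.mp h
  unfold Tm
  rw [trace_tensorOp]
  refine Finset.prod_eq_zero (Finset.mem_univ i) ?_
  have hd : decode (v i) ≠ 0 := by
    intro hc
    apply hi
    have := congrArg encode hc
    rw [encode_decode] at this
    rw [this]; rfl
  revert hd
  have : ∀ a : Fin 4, a ≠ 0 → (pauli1 a).trace = 0 := by
    intro a ha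
    fin_cases a
    · exact absurd rfl ha
    all_goals simp [pauli1, Matrix.trace, Matrix.diag, Fin.sum_univ_two]
  exact this _

lemma Tm_inj {v w : Fin n → ZMod 2 × ZMod 2} {c : ℂ} (hc : c ≠ 0) (h : c • Tm v = Tm w) :
    v = w := by
  by_contra hne
  have hvw : v + w ≠ 0 := by
    intro hz
    apply hne
    have := congrArg (· + w) hz
    simp only [zero_add] at this
    rw [← this, add_assoc, add_self_zero, add_zero]
  have h2 : (c • Tm v) * Tm w = Tm w * Tm w := by rw [h]
  rw [Matrix.smul_mul, Tm_mul, Tm_sq] at h2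
  have h3 := congrArg Matrix.trace h2
  rw [Matrix.trace_smul, Matrix.trace_smul, trace_Tm_ne _ hvw, Matrix.trace_one] at h3
  simp only [smul_zero, smul_eq_mul, mul_zero] at h3
  have hcard : (Fintype.card (Q n) : ℂ) ≠ 0 := Nat.cast_ne_zero.mpr Fintype.card_ne_zero
  exact hcard (by rw [← h3]; try ring)

lemma chi_sum {ι : Type*} (s : Finset ι) (f : ι → ZMod 2) :
    chi (∑ i ∈ s, f i) = ∏ i ∈ s, chi (f i) := by
  induction s using Finset.cons_induction with
  | empty => simp [chi_zero]
  | cons a s ha ih => rw [Finset.sum_cons, Finset.prod_cons, chi_add, ih]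

lemma Tm_comm_chi (v w : Fin n → ZMod 2 × ZMod 2) :
    Tm v * Tm w = chi (∑ i, sp (v i) (w i)) • (Tm w * Tm v) := by
  rw [Tm_mul, Tm_mul, add_comm w v, smul_smul]
  congr 1
  have key : ∀ i, (Complex.I : ℂ) ^ ctab (decode (v i)) (decode (w i))
      = chi (sp (v i) (w i)) * Complex.I ^ ctab (decode (w i)) (decode (v i)) := by
    intro i
    have := ctab_chi (decode (v i)) (decode (w i))
    rwa [encode_decode, encode_decode] at this
  calc (Complex.I : ℂ) ^ (∑ i, ctab (decode (v i)) (decode (w i)))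
      = ∏ i, (Complex.I : ℂ) ^ ctab (decode (v i)) (decode (w i)) := by
        rw [Finset.prod_pow_eq_pow_sum]
    _ = ∏ i, (chi (sp (v i) (w i)) * Complex.I ^ ctab (decode (w i)) (decode (v i))) :=
        Finset.prod_congr rfl fun i _ => key i
    _ = (∏ i, chi (sp (v i) (w i))) * ∏ i, Complex.I ^ ctab (decode (w i)) (decode (v i)) :=
        Finset.prod_mul_distrib
    _ = chi (∑ i, sp (v i) (w i)) * Complex.I ^ (∑ i, ctab (decode (w i)) (decode (v i))) := by
        rw [chi_sum, Finset.prod_pow_eq_pow_sum]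

lemma Tm_comm_iff (v w : Fin n → ZMod 2 × ZMod 2) :
    Tm v * Tm w = Tm w * Tm v ↔ (∑ i, sp (v i) (w i)) = 0 := by
  constructor
  · intro h
    rcases zmod2_cases (∑ i, sp (v i) (w i)) with h0|h1
    · exact h0
    · exfalso
      rw [Tm_comm_chi, h1, show chi 1 = -1 from by norm_num [chi]] at h
      set X := Tm w * Tm v with hXdef
      have hne : X ≠ 0 := by
        rw [hXdef, Tm_mul]
        intro hc
        rcases smul_eq_zero.mp hc with h'|h'
        · exact pow_ne_zero _ Complex.I_ne_zero h'
        · exact Tm_ne_zero _ h'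
      have h' : -X = X := by rw [← neg_one_smul ℂ X]; exact h
      have hXX : X + X = 0 := by
        calc X + X = -X + X := by rw [h']
          _ = 0 := neg_add_cancel X
      have h2X : (2 : ℂ) • X = 0 := by rw [two_smul]; exact hXX
      rcases smul_eq_zero.mp h2X with h'|h'
      · norm_num at h'
      · exact hne h'
  · intro h
    rw [Tm_comm_chi, h, chi_zero, one_smul]
end TensorPart

section GroupPart
open SCAux
variable {n : ℕ}

lemma I_pow_four_mul (s : ℕ) : (Complex.I : ℂ) ^ (4 * s) = 1 := by
  rw [pow_mul, Complex.I_pow_four, one_pow]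

lemma star_I_pow (s : ℕ) : star ((Complex.I : ℂ) ^ s) = Complex.I ^ (3 * s) := by
  rw [star_pow, show (star Complex.I : ℂ) = Complex.I ^ 3 from by
    simp [Complex.star_def, Complex.conj_I, pow_succ, Complex.I_mul_I], ← pow_mul, mul_comm]

lemma mem_pauli_iff {M : Matrix (Q n) (Q n) ℂ} :
    M ∈ PauliGroup n ↔ ∃ (s : ℕ) (v : Fin n → ZMod 2 × ZMod 2), M = Complex.I ^ s • Tm v := by
  constructor
  · rintro ⟨s, f, rfl⟩
    refine ⟨(s : ℕ), fun i => encode (f i), ?_⟩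
    unfold Tm
    simp_rw [decode_encode]
  · rintro ⟨s, v, rfl⟩
    refine ⟨⟨s % 4, by omega⟩, fun i => decode (v i), ?_⟩
    have : (Complex.I : ℂ) ^ s = Complex.I ^ (s % 4) := by
      conv_lhs => rw [← Nat.div_add_mod s 4]
      rw [pow_add, pow_mul, Complex.I_pow_four, one_pow, one_mul]
    rw [this]
    rfl

lemma pauli_one : (1 : Matrix (Q n) (Q n) ℂ) ∈ PauliGroup n := by
  rw [mem_pauli_iff]
  exact ⟨0, 0, by rw [Tm_zero, pow_zero, one_smul]⟩

lemma pauli_mul {A B : Matrix (Q n) (Q n) ℂ} (hA : A ∈ PauliGroup n) (hB : B ∈ PauliGroup n) :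
    A * B ∈ PauliGroup n := by
  rw [mem_pauli_iff] at *
  obtain ⟨s, v, rfl⟩ := hA
  obtain ⟨t, w, rfl⟩ := hB
  refine ⟨s + t + ∑ i, ctab (decode (v i)) (decode (w i)), v + w, ?_⟩
  rw [Matrix.smul_mul, Matrix.mul_smul, Tm_mul, smul_smul, smul_smul, ← pow_add, ← pow_add]

lemma pauli_conjT {A : Matrix (Q n) (Q n) ℂ} (hA : A ∈ PauliGroup n) :
    Aᴴ ∈ PauliGroup n := by
  rw [mem_pauli_iff] at *
  obtain ⟨s, v, rfl⟩ := hA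
  refine ⟨3 * s, v, ?_⟩
  rw [Matrix.conjTranspose_smul, Tm_herm, star_I_pow]

lemma smul_mem_pauli {A : Matrix (Q n) (Q n) ℂ} (hA : A ∈ PauliGroup n) (s : ℕ) :
    Complex.I ^ s • A ∈ PauliGroup n := by
  rw [mem_pauli_iff] at *
  obtain ⟨t, v, rfl⟩ := hA
  exact ⟨s + t, v, by rw [smul_smul, ← pow_add]⟩

lemma maxAbelian_phase {G : Set (Matrix (Q n) (Q n) ℂ)} (hG : IsMaxAbelian n G)
    {A : Matrix (Q n) (Q n) ℂ} (hA : A ∈ G) (s : ℕ) : Complex.I ^ s • A ∈ G := by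
  set G' : Set (Matrix (Q n) (Q n) ℂ) :=
    {M | ∃ (s : ℕ) (A : Matrix (Q n) (Q n) ℂ), A ∈ G ∧ M = Complex.I ^ s • A} with hG'def
  have hsub : IsPauliSubgroup n G' := by
    refine ⟨?_, ⟨0, 1, hG.1.2.1, by rw [pow_zero, one_smul]⟩, ?_, ?_⟩
    · rintro M ⟨s, A, hA, rfl⟩
      exact smul_mem_pauli (hG.1.1 hA) s
    · rintro M ⟨s, A, hA, rfl⟩ M' ⟨t, B, hB, rfl⟩
      refine ⟨s + t, A * B, hG.1.2.2.1 A hA B hB, ?_⟩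
      rw [Matrix.smul_mul, Matrix.mul_smul, smul_smul, ← pow_add]
    · rintro M ⟨s, A, hA, rfl⟩
      refine ⟨3 * s, Aᴴ, hG.1.2.2.2 A hA, ?_⟩
      rw [Matrix.conjTranspose_smul, star_I_pow]
  have hab : ∀ A ∈ G', ∀ B ∈ G', A * B = B * A := by
    rintro M ⟨s, A, hA, rfl⟩ M' ⟨t, B, hB, rfl⟩
    rw [Matrix.smul_mul, Matrix.mul_smul, smul_smul, Matrix.smul_mul, Matrix.mul_smul, smul_smul,
      mul_comm ((Complex.I : ℂ) ^ s), hG.2.1 A hA B hB]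
  have hGG' : G ⊆ G' := fun B hB => ⟨0, B, hB, by rw [pow_zero, one_smul]⟩
  exact hG.2.2 G' hsub hab hGG' ⟨s, A, hA, rfl⟩

lemma centralizer_mem {G : Set (Matrix (Q n) (Q n) ℂ)} (hG : IsMaxAbelian n G)
    {M : Matrix (Q n) (Q n) ℂ} (hM : M ∈ PauliGroup n)
    (hc : ∀ A ∈ G, A * M = M * A) : M ∈ G := by
  obtain ⟨s, v, rfl⟩ := mem_pauli_iff.mp hM
  set M := Complex.I ^ s • Tm v with hMdef
  have hMM : M * M = Complex.I ^ (s + s) • (1 : Matrix (Q n) (Q n) ℂ) := by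
    rw [hMdef, Matrix.smul_mul, Matrix.mul_smul, smul_smul, ← pow_add, Tm_sq]
  have hMMG : M * M ∈ G := by rw [hMM]; exact maxAbelian_phase hG hG.1.2.1 _
  have hMH : Mᴴ = Complex.I ^ (6 * s) • M := by
    rw [hMdef, Matrix.conjTranspose_smul, Tm_herm, star_I_pow, smul_smul, ← pow_add]
    congr 1
    rw [show 6 * s + s = 3 * s + 4 * s from by ring, pow_add, I_pow_four_mul, mul_one]
  set S : Set (Matrix (Q n) (Q n) ℂ) :=
    {X | X ∈ G ∨ ∃ A ∈ G, X = A * M} with hSdef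
  have hsub : IsPauliSubgroup n S := by
    refine ⟨?_, Or.inl hG.1.2.1, ?_, ?_⟩
    · rintro X (hX | ⟨A, hA, rfl⟩)
      · exact hG.1.1 hX
      · exact pauli_mul (hG.1.1 hA) hM
    · rintro X (hX | ⟨A, hA, rfl⟩) Y (hY | ⟨B, hB, rfl⟩)
      · exact Or.inl (hG.1.2.2.1 _ hX _ hY)
      · exact Or.inr ⟨X * B, hG.1.2.2.1 _ hX _ hB, by rw [mul_assoc]⟩
      · refine Or.inr ⟨A * Y, hG.1.2.2.1 _ hA _ hY, ?_⟩
        rw [mul_assoc, mul_assoc, hc Y hY]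
      · refine Or.inl ?_
        have : A * M * (B * M) = A * B * (M * M) := by
          rw [mul_assoc, ← mul_assoc M B M, ← hc B hB, mul_assoc, ← mul_assoc, ← mul_assoc]
        rw [this, hMM, Matrix.mul_smul, mul_one]
        exact maxAbelian_phase hG (hG.1.2.2.1 _ hA _ hB) _
    · rintro X (hX | ⟨A, hA, rfl⟩)
      · exact Or.inl (hG.1.2.2.2 _ hX)
      · refine Or.inr ⟨Complex.I ^ (6 * s) • Aᴴ, maxAbelian_phase hG (hG.1.2.2.2 _ hA) _, ?_⟩
        rw [Matrix.conjTranspose_mul, hMH, Matrix.smul_mul, ← hc _ (hG.1.2.2.2 _ hA),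
          ← Matrix.smul_mul]
  have hab : ∀ X ∈ S, ∀ Y ∈ S, X * Y = Y * X := by
    have key : ∀ A ∈ G, ∀ B ∈ G, A * M * (B * M) = B * M * (A * M) := by
      intro A hA B hB
      have e1 : A * M * (B * M) = A * B * (M * M) := by
        rw [mul_assoc, ← mul_assoc M B M, ← hc B hB, mul_assoc, ← mul_assoc, ← mul_assoc]
      have e2 : B * M * (A * M) = B * A * (M * M) := by
        rw [mul_assoc, ← mul_assoc M A M, ← hc A hA, mul_assoc, ← mul_assoc, ← mul_assoc]
      rw [e1, e2, hG.2.1 A hA B hB]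
    rintro X (hX | ⟨A, hA, rfl⟩) Y (hY | ⟨B, hB, rfl⟩)
    · exact hG.2.1 _ hX _ hY
    · rw [← mul_assoc, hG.2.1 _ hX _ hB, mul_assoc, hc X hX, ← mul_assoc]
    · rw [mul_assoc, ← hc Y hY, ← mul_assoc, hG.2.1 _ hA _ hY, mul_assoc]
    · exact key A hA B hB
  have hGS : G ⊆ S := fun B hB => Or.inl hB
  have := hG.2.2 S hsub hab hGS
  exact this (Or.inr ⟨1, hG.1.2.1, (one_mul M).symm⟩)

lemma maxAbelian_of_centralizer {G : Set (Matrix (Q n) (Q n) ℂ)}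
    (h1 : IsPauliSubgroup n G) (h2 : ∀ A ∈ G, ∀ B ∈ G, A * B = B * A)
    (h3 : ∀ M ∈ PauliGroup n, (∀ A ∈ G, A * M = M * A) → M ∈ G) : IsMaxAbelian n G :=
  ⟨h1, h2, fun G' hG' hab hsub A hA =>
    h3 A (hG'.1 hA) fun B hB => hab B (hsub hB) A hA⟩

end GroupPart

section SymplecticPart
open SCAux

variable {n : ℕ}

abbrev Vn (n : ℕ) := Fin n → ZMod 2 × ZMod 2

lemma sp_add_left (a a' b : ZMod 2 × ZMod 2) : sp (a + a') b = sp a b + sp a' b := by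
  simp only [sp, Prod.fst_add, Prod.snd_add]; ring

lemma sp_add_right (a b b' : ZMod 2 × ZMod 2) : sp a (b + b') = sp a b + sp a b' := by
  simp only [sp, Prod.fst_add, Prod.snd_add]; ring

lemma sp_smul_left (c : ZMod 2) (a b : ZMod 2 × ZMod 2) : sp (c • a) b = c * sp a b := by
  simp only [sp, Prod.smul_fst, Prod.smul_snd, smul_eq_mul]; ring

lemma sp_smul_right (c : ZMod 2) (a b : ZMod 2 × ZMod 2) : sp a (c • b) = c * sp a b := by
  simp only [sp, Prod.smul_fst, Prod.smul_snd, smul_eq_mul]; ring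

lemma sp_comm (a b : ZMod 2 × ZMod 2) : sp a b = sp b a := by
  simp only [sp]; ring

noncomputable def Bf (n : ℕ) : LinearMap.BilinForm (ZMod 2) (Vn n) :=
  LinearMap.mk₂ (ZMod 2) (fun v w => ∑ i, sp (v i) (w i))
    (fun v v' w => by
      simp only [Pi.add_apply]
      rw [← Finset.sum_add_distrib]
      exact Finset.sum_congr rfl fun i _ => sp_add_left _ _ _)
    (fun c v w => by
      simp only [Pi.smul_apply, smul_eq_mul, Finset.mul_sum]
      exact Finset.sum_congr rfl fun i _ => sp_smul_left _ _ _)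
    (fun v w w' => by
      simp only [Pi.add_apply]
      rw [← Finset.sum_add_distrib]
      exact Finset.sum_congr rfl fun i _ => sp_add_right _ _ _)
    (fun c v w => by
      simp only [Pi.smul_apply, smul_eq_mul, Finset.mul_sum]
      exact Finset.sum_congr rfl fun i _ => sp_smul_right _ _ _)

lemma Bf_apply (v w : Vn n) : Bf n v w = ∑ i, sp (v i) (w i) := rfl

lemma Bf_comm (v w : Vn n) : Bf n v w = Bf n w v := by
  rw [Bf_apply, Bf_apply]
  exact Finset.sum_congr rfl fun i _ => sp_comm _ _

lemma Bf_refl : (Bf n).IsRefl := fun v w h => by rw [Bf_comm]; exact h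

lemma Bf_nondegenerate : (Bf n).Nondegenerate := by
  refine (LinearMap.IsRefl.nondegenerate_iff_separatingLeft (Bf_refl (n := n))).mpr ?_
  intro v h
  funext i
  have h1 := h (fun j => if j = i then ((0 : ZMod 2), (1 : ZMod 2)) else 0)
  have h2 := h (fun j => if j = i then ((1 : ZMod 2), (0 : ZMod 2)) else 0)
  rw [Bf_apply] at h1 h2
  rw [Finset.sum_eq_single i (fun j _ hj => by simp [sp, hj]) (by simp)] at h1 h2
  simp [sp] at h1 h2
  show v i = (0, 0)
  rw [Prod.ext_iff]
  constructor
  · simpa using h1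
  · simpa using h2

instance : Fact (Nat.Prime 2) := ⟨Nat.prime_two⟩

lemma finrank_Vn : Module.finrank (ZMod 2) (Vn n) = 2 * n := by
  rw [Module.finrank_pi_fintype]
  have : ∀ i : Fin n, Module.finrank (ZMod 2) (ZMod 2 × ZMod 2) = 2 := by
    intro i
    rw [Module.finrank_prod, Module.finrank_self]
  simp [Module.finrank_prod, Module.finrank_self]
  ring

lemma isotropic_max {W W' : Submodule (ZMod 2) (Vn n)}
    (hW : (Bf n).orthogonal W = W)
    (hiso : W' ≤ (Bf n).orthogonal W')
    (hcard : Nat.card W ≤ Nat.card W') :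
    (Bf n).orthogonal W' ≤ W' := by
  have hfr : ∀ M : Submodule (ZMod 2) (Vn n),
      Module.finrank (ZMod 2) ((Bf n).orthogonal M) = 2 * n - Module.finrank (ZMod 2) M := by
    intro M
    rw [LinearMap.BilinForm.finrank_orthogonal Bf_nondegenerate, finrank_Vn]
  have hWle : Module.finrank (ZMod 2) W ≤ 2 * n := finrank_Vn (n := n) ▸ Submodule.finrank_le W
  have hW'le : Module.finrank (ZMod 2) W' ≤ 2 * n := finrank_Vn (n := n) ▸ Submodule.finrank_le W'
  have hWn : Module.finrank (ZMod 2) W = n := by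
    have := hfr W
    rw [hW] at this
    omega
  have hcard_eq : ∀ M : Submodule (ZMod 2) (Vn n),
      Nat.card M = 2 ^ Module.finrank (ZMod 2) M := by
    intro M
    haveI : Fintype M := Fintype.ofFinite M
    rw [Nat.card_eq_fintype_card, Module.card_eq_pow_finrank (K := ZMod 2), ZMod.card]
  have hW'n : n ≤ Module.finrank (ZMod 2) W' := by
    rw [hcard_eq W, hcard_eq W', hWn] at hcard
    exact (Nat.pow_le_pow_iff_right (by norm_num)).mp hcard
  have : Module.finrank (ZMod 2) ((Bf n).orthogonal W') ≤ Module.finrank (ZMod 2) W' := by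
    rw [hfr W']
    omega
  exact le_of_eq (Submodule.eq_of_le_of_finrank_le hiso this).symm

end SymplecticPart

section Bridge
open SCAux

variable {n : ℕ}

noncomputable def WSub (K : Set (Matrix (Q n) (Q n) ℂ))
    (h1 : (1 : Matrix (Q n) (Q n) ℂ) ∈ K)
    (hmul : ∀ A ∈ K, ∀ B ∈ K, A * B ∈ K) : Submodule (ZMod 2) (Vn n) where
  carrier := {v | ∃ s : ℕ, Complex.I ^ s • Tm v ∈ K}
  zero_mem' := ⟨0, by rw [Tm_zero, pow_zero, one_smul]; exact h1⟩
  add_mem' := by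
    rintro v w ⟨s, hs⟩ ⟨t, ht⟩
    refine ⟨s + t + ∑ i, ctab (decode (v i)) (decode (w i)), ?_⟩
    have h2 := hmul _ hs _ ht
    rwa [Matrix.smul_mul, Matrix.mul_smul, Tm_mul, smul_smul, smul_smul, ← pow_add, ← pow_add]
      at h2
  smul_mem' := by
    intro c v hv
    rcases zmod2_cases c with rfl | rfl
    · rw [zero_smul]; exact ⟨0, by rw [Tm_zero, pow_zero, one_smul]; exact h1⟩
    · simp only [one_smul]; exact hv

lemma mem_WSub {K : Set (Matrix (Q n) (Q n) ℂ)} {h1 hmul} {v : Vn n} :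
    v ∈ WSub K h1 hmul ↔ ∃ s : ℕ, Complex.I ^ s • Tm v ∈ K := Iff.rfl

lemma comm_smul_iff {v w : Vn n} {c d : ℂ} (hc : c ≠ 0) (hd : d ≠ 0) :
    (c • Tm v) * (d • Tm w) = (d • Tm w) * (c • Tm v) ↔ Bf n v w = 0 := by
  rw [Matrix.smul_mul, Matrix.mul_smul, smul_smul, Matrix.smul_mul, Matrix.mul_smul, smul_smul,
    mul_comm d c]
  constructor
  · intro h
    have h' := smul_right_injective (Matrix (Q n) (Q n) ℂ) (mul_ne_zero hc hd) h
    rw [Bf_apply]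
    exact (Tm_comm_iff v w).mp h'
  · intro h
    rw [Bf_apply] at h
    rw [(Tm_comm_iff v w).mpr h]

end Bridge

open SCAux

/-- a unitary `U ∈ C_k` is semi-Clifford iff `(U P_n U†) ∩ P_n`
contains a maximal abelian subgroup of the Pauli group. -/
theorem semiClifford_iff_image_contains_maxAbelian (n k : ℕ)
    (U : Matrix (Q n) (Q n) ℂ)
    (hU : U ∈ Matrix.unitaryGroup (Q n) ℂ) (hUk : U ∈ Ck n k) :
    SemiClifford n U ↔
      ∃ G, IsMaxAbelian n G ∧
        G ⊆ ((fun A => U * A * Uᴴ) '' PauliGroup n) ∩ PauliGroup n := by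
  have hU2 : U * Uᴴ = 1 := by
    have h := Matrix.mem_unitaryGroup_iff.mp hU
    rwa [Matrix.star_eq_conjTranspose] at h
  have hU1 : Uᴴ * U = 1 := by
    have h := Matrix.mem_unitaryGroup_iff'.mp hU
    rwa [Matrix.star_eq_conjTranspose] at h
  have cancel1 : ∀ P : Matrix (Q n) (Q n) ℂ, Uᴴ * (U * P * Uᴴ) * U = P := by
    intro P
    calc Uᴴ * (U * P * Uᴴ) * U = (Uᴴ * U) * P * (Uᴴ * U) := by simp only [Matrix.mul_assoc]
      _ = P := by rw [hU1, Matrix.one_mul, Matrix.mul_one]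
  have cancel2 : ∀ P : Matrix (Q n) (Q n) ℂ, U * (Uᴴ * P * U) * Uᴴ = P := by
    intro P
    calc U * (Uᴴ * P * U) * Uᴴ = (U * Uᴴ) * P * (U * Uᴴ) := by simp only [Matrix.mul_assoc]
      _ = P := by rw [hU2, Matrix.one_mul, Matrix.mul_one]
  have hmulH : ∀ A B : Matrix (Q n) (Q n) ℂ,
      (Uᴴ * A * U) * (Uᴴ * B * U) = Uᴴ * (A * B) * U := by
    intro A B
    calc (Uᴴ * A * U) * (Uᴴ * B * U) = Uᴴ * (A * ((U * Uᴴ) * (B * U))) := by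
          simp only [Matrix.mul_assoc]
      _ = Uᴴ * (A * B) * U := by rw [hU2, Matrix.one_mul]; simp only [Matrix.mul_assoc]
  have hconjH : ∀ A : Matrix (Q n) (Q n) ℂ, (Uᴴ * A * U)ᴴ = Uᴴ * Aᴴ * U := by
    intro A
    simp only [Matrix.conjTranspose_mul, Matrix.conjTranspose_conjTranspose, Matrix.mul_assoc]
  constructor
  · rintro ⟨-, G0, hG0, hG0img⟩
    refine ⟨(fun A => U * A * Uᴴ) '' G0, hG0img, ?_⟩
    rintro M ⟨A, hA, rfl⟩
    exact ⟨⟨A, hG0.1.1 hA, rfl⟩, hG0img.1.1 ⟨A, hA, rfl⟩⟩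
  · rintro ⟨G, hG, hGsub⟩
    set H : Set (Matrix (Q n) (Q n) ℂ) := (fun A => Uᴴ * A * U) '' G with hHdef
    have himg : ((fun A => U * A * Uᴴ) '' H) = G := by
      ext M
      constructor
      · rintro ⟨B, ⟨A, hA, rfl⟩, rfl⟩
        show U * (Uᴴ * A * U) * Uᴴ ∈ G
        rw [cancel2 A]; exact hA
      · intro hM
        exact ⟨Uᴴ * M * U, ⟨M, hM, rfl⟩, cancel2 M⟩
    have hHP : H ⊆ PauliGroup n := by
      rintro B ⟨A, hA, rfl⟩
      obtain ⟨P, hP, hPe⟩ := (hGsub hA).1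
      show Uᴴ * A * U ∈ PauliGroup n
      rw [← hPe]
      show Uᴴ * (U * P * Uᴴ) * U ∈ PauliGroup n
      rw [cancel1 P]
      exact hP
    have hH1 : (1 : Matrix (Q n) (Q n) ℂ) ∈ H :=
      ⟨1, hG.1.2.1, by show Uᴴ * 1 * U = 1; rw [Matrix.mul_one, hU1]⟩
    have hHmul : ∀ A ∈ H, ∀ B ∈ H, A * B ∈ H := by
      rintro X ⟨A, hA, rfl⟩ Y ⟨B, hB, rfl⟩
      exact ⟨A * B, hG.1.2.2.1 A hA B hB, (hmulH A B).symm⟩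
    have hHconj : ∀ A ∈ H, Aᴴ ∈ H := by
      rintro X ⟨A, hA, rfl⟩
      exact ⟨Aᴴ, hG.1.2.2.2 A hA, (hconjH A).symm⟩
    have hHsub : IsPauliSubgroup n H := ⟨hHP, hH1, hHmul, hHconj⟩
    have hHab : ∀ A ∈ H, ∀ B ∈ H, A * B = B * A := by
      rintro X ⟨A, hA, rfl⟩ Y ⟨B, hB, rfl⟩
      show (Uᴴ * A * U) * (Uᴴ * B * U) = (Uᴴ * B * U) * (Uᴴ * A * U)
      rw [hmulH, hmulH, hG.2.1 A hA B hB]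
    have hHphase : ∀ X ∈ H, ∀ s : ℕ, Complex.I ^ s • X ∈ H := by
      rintro X ⟨A, hA, rfl⟩ s
      refine ⟨Complex.I ^ s • A, maxAbelian_phase hG hA s, ?_⟩
      show Uᴴ * (Complex.I ^ s • A) * U = Complex.I ^ s • (Uᴴ * A * U)
      rw [Matrix.mul_smul, Matrix.smul_mul]
    set WG := WSub G hG.1.2.1 hG.1.2.2.1 with hWGdef
    set WH := WSub H hH1 hHmul with hWHdef
    have hGrep : ∀ A ∈ G, ∃ (s : ℕ) (v : Vn n), A = Complex.I ^ s • Tm v ∧ v ∈ WG := by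
      intro A hA
      obtain ⟨s, v, rfl⟩ := mem_pauli_iff.mp (hG.1.1 hA)
      exact ⟨s, v, rfl, mem_WSub.mpr ⟨s, hA⟩⟩
    have hHrep : ∀ A ∈ H, ∃ (s : ℕ) (v : Vn n), A = Complex.I ^ s • Tm v ∧ v ∈ WH := by
      intro A hA
      obtain ⟨s, v, rfl⟩ := mem_pauli_iff.mp (hHP hA)
      exact ⟨s, v, rfl, mem_WSub.mpr ⟨s, hA⟩⟩
    have hIne : ∀ s : ℕ, (Complex.I : ℂ) ^ s ≠ 0 := fun s => pow_ne_zero s Complex.I_ne_zero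
    have hWGmem : ∀ v, v ∈ WG → Tm v ∈ G := by
      intro v hv
      obtain ⟨s, hs⟩ := mem_WSub.mp hv
      have h2 := maxAbelian_phase hG hs (3 * s)
      rwa [smul_smul, ← pow_add, show 3 * s + s = 4 * s from by ring, I_pow_four_mul,
        one_smul] at h2
    have hWGorth : (Bf n).orthogonal WG = WG := by
      apply le_antisymm
      · intro v hv
        have hcomm : ∀ A ∈ G, A * Tm v = Tm v * A := by
          intro A hA
          obtain ⟨s, w, rfl, hw⟩ := hGrep A hA
          have hB : Bf n w v = 0 :=
            LinearMap.BilinForm.isOrtho_def.mp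
              ((LinearMap.BilinForm.mem_orthogonal_iff.mp hv) w hw)
          have h1 : ((Complex.I : ℂ) ^ s • Tm w) * ((1 : ℂ) • Tm v)
              = ((1 : ℂ) • Tm v) * ((Complex.I : ℂ) ^ s • Tm w) :=
            (comm_smul_iff (hIne s) one_ne_zero).mpr hB
          rwa [one_smul] at h1
        have hTv : Tm v ∈ PauliGroup n := mem_pauli_iff.mpr ⟨0, v, by rw [pow_zero, one_smul]⟩
        exact mem_WSub.mpr ⟨0, by rw [pow_zero, one_smul]; exact centralizer_mem hG hTv hcomm⟩
      · intro v hv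
        rw [LinearMap.BilinForm.mem_orthogonal_iff]
        intro w hw
        obtain ⟨s, hs⟩ := mem_WSub.mp hw
        obtain ⟨t, ht⟩ := mem_WSub.mp hv
        exact (comm_smul_iff (hIne s) (hIne t)).mp (hG.2.1 _ hs _ ht)
    have hWHiso : WH ≤ (Bf n).orthogonal WH := by
      intro v hv
      rw [LinearMap.BilinForm.mem_orthogonal_iff]
      intro w hw
      obtain ⟨s, hs⟩ := mem_WSub.mp hw
      obtain ⟨t, ht⟩ := mem_WSub.mp hv
      exact (comm_smul_iff (hIne s) (hIne t)).mp (hHab _ hs _ ht)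
    have hkey : ∀ v : ↥WG, ∃ w : ↥WH, ∃ t : ℕ,
        Uᴴ * Tm (v : Vn n) * U = Complex.I ^ t • Tm (w : Vn n) := by
      rintro ⟨v, hv⟩
      have hmemH : Uᴴ * Tm v * U ∈ H := ⟨Tm v, hWGmem v hv, rfl⟩
      obtain ⟨t, w, he, hwH⟩ := hHrep _ hmemH
      exact ⟨⟨w, hwH⟩, t, he⟩
    obtain ⟨φ, hφ⟩ := Classical.axiomOfChoice hkey
    have hφinj : Function.Injective φ := by
      intro v v' he
      obtain ⟨t, ht⟩ := hφ v
      obtain ⟨t', ht'⟩ := hφ v'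
      rw [he] at ht
      have e1 : Tm (v : Vn n) = Complex.I ^ t • (U * Tm ((φ v') : Vn n) * Uᴴ) := by
        rw [← cancel2 (Tm (v : Vn n)), ht, Matrix.mul_smul, Matrix.smul_mul]
      have e1' : Tm ((v' : ↥WG) : Vn n) = Complex.I ^ t' • (U * Tm ((φ v') : Vn n) * Uᴴ) := by
        rw [← cancel2 (Tm ((v' : ↥WG) : Vn n)), ht', Matrix.mul_smul, Matrix.smul_mul]
      have e2 : Complex.I ^ (3 * t + t') • Tm (v : Vn n) = Tm ((v' : ↥WG) : Vn n) := by
        rw [e1, e1', smul_smul, ← pow_add]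
        congr 1
        rw [show 3 * t + t' + t = t' + 4 * t from by ring, pow_add, I_pow_four_mul, mul_one]
      exact Subtype.ext (Tm_inj (hIne _) e2)
    have hcard : Nat.card ↥WG ≤ Nat.card ↥WH := Nat.card_le_card_of_injective φ hφinj
    have horthH : (Bf n).orthogonal WH ≤ WH := isotropic_max hWGorth hWHiso hcard
    have hHmax : IsMaxAbelian n H := by
      refine maxAbelian_of_centralizer hHsub hHab ?_
      intro M hM hcomm
      obtain ⟨s, v, rfl⟩ := mem_pauli_iff.mp hM
      have hvorth : v ∈ (Bf n).orthogonal WH := by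
        rw [LinearMap.BilinForm.mem_orthogonal_iff]
        intro w hw
        obtain ⟨t, ht⟩ := mem_WSub.mp hw
        exact (comm_smul_iff (hIne t) (hIne s)).mp (hcomm _ ht)
      obtain ⟨t, ht⟩ := mem_WSub.mp (horthH hvorth)
      have h2 := hHphase _ ht (s + 3 * t)
      rwa [smul_smul, ← pow_add, show s + 3 * t + t = s + 4 * t from by ring, pow_add,
        I_pow_four_mul, mul_one] at h2
    exact ⟨hU, H, hHmax, by rw [himg]; exact hG⟩
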